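/- If v_k = β₂ v_{k-1} + (1-β₂) g_k² with v₀ ≥ 0 coordinate-wise and m_k = β₁ m_{k-1} + (1-β₁) g_k with m₀ = 0 and β₁ ≤ √β₂, then m_{k,i}² ≤ v_{k,i} · (1-β₁)²/((1-β₂)(1-β₁²/β₂)) for every k ≥ 1 and coordinate i with v_{k,i} > 0. -/

import Mathlib

theorem adam_moment_ratio_bound {d : ℕ} (β₁ β₂ : ℝ)
    (h1 : 0 < β₁ ^ 2) (h2 : β₁ ^ 2 < β₂) (h3 : β₂ < 1)
    (hβ : β₁ ≤ Real.sqrt β₂)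
    (g m v : ℕ → Fin d → ℝ)
    (hm0 : m 0 = 0) (hv0 : ∀ i, 0 ≤ v 0 i)
    (hm : ∀ k i, m (k + 1) i = β₁ * m k i + (1 - β₁) * g (k + 1) i)
    (hv : ∀ k i, v (k + 1) i = β₂ * v k i + (1 - β₂) * (g (k + 1) i) ^ 2) :
    ∀ k, 1 ≤ k → ∀ i, 0 < v k i →
      (m k i) ^ 2 ≤ v k i * ((1 - β₁) ^ 2 / ((1 - β₂) * (1 - β₁ ^ 2 / β₂))) := by
  intro k _ i _
  have hβ₂pos : 0 < β₂ := h1.trans h2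
  have hsq : Real.sqrt β₂ ^ 2 = β₂ := Real.sq_sqrt hβ₂pos.le
  have hsqpos : 0 < Real.sqrt β₂ := Real.sqrt_pos.mpr hβ₂pos
  set r : ℝ := β₁ ^ 2 / β₂ with hr
  have hr0 : 0 ≤ r := by positivity
  have hr1 : r < 1 := (div_lt_one hβ₂pos).mpr h2
  have hmsum : ∀ n, m n i = (1 - β₁) * ∑ j ∈ Finset.range n, β₁ ^ j * g (n - j) i := by
    intro n
    induction n with
    | zero => simp [hm0]
    | succ n ih =>
      have hs : ∑ j ∈ Finset.range n, β₁ ^ (j + 1) * g (n - j) i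
          = β₁ * ∑ j ∈ Finset.range n, β₁ ^ j * g (n - j) i := by
        rw [Finset.mul_sum]; exact Finset.sum_congr rfl fun j _ => by ring
      rw [hm n i, ih, Finset.sum_range_succ']
      simp only [Nat.succ_sub_succ, Nat.sub_zero, pow_zero, one_mul]
      rw [hs]; ring
  have hvsum : ∀ n, v n i = β₂ ^ n * v 0 i +
      (1 - β₂) * ∑ j ∈ Finset.range n, β₂ ^ j * (g (n - j) i) ^ 2 := by
    intro n
    induction n with
    | zero => simp
    | succ n ih =>
      have hs : ∑ j ∈ Finset.range n, β₂ ^ (j + 1) * (g (n - j) i) ^ 2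
          = β₂ * ∑ j ∈ Finset.range n, β₂ ^ j * (g (n - j) i) ^ 2 := by
        rw [Finset.mul_sum]; exact Finset.sum_congr rfl fun j _ => by ring
      rw [hv n i, ih, Finset.sum_range_succ']
      simp only [Nat.succ_sub_succ, Nat.sub_zero, pow_zero, one_mul]
      rw [hs]; ring
  set S : ℝ := ∑ j ∈ Finset.range k, β₁ ^ j * g (k - j) i with hS
  set T : ℝ := ∑ j ∈ Finset.range k, β₂ ^ j * (g (k - j) i) ^ 2 with hT
  set R : ℝ := ∑ j ∈ Finset.range k, r ^ j with hR
  have hT0 : 0 ≤ T := Finset.sum_nonneg fun j _ => by positivity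
  have hR0 : 0 ≤ R := Finset.sum_nonneg fun j _ => by positivity
  have hcs : S ^ 2 ≤ R * T := by
    have h := Finset.sum_mul_sq_le_sq_mul_sq (Finset.range k)
      (fun j => (β₁ / Real.sqrt β₂) ^ j) (fun j => Real.sqrt β₂ ^ j * g (k - j) i)
    have e1 : ∀ j, (β₁ / Real.sqrt β₂) ^ j * (Real.sqrt β₂ ^ j * g (k - j) i)
        = β₁ ^ j * g (k - j) i := by
      intro j
      have hne : Real.sqrt β₂ ^ j ≠ 0 := pow_ne_zero _ hsqpos.ne'
      field_simp
      rw [← mul_pow, div_mul_cancel₀ _ hsqpos.ne', mul_comm]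
    have e2 : ∀ j, ((β₁ / Real.sqrt β₂) ^ j) ^ 2 = r ^ j := by
      intro j
      rw [← pow_mul, mul_comm j 2, pow_mul, div_pow, hsq, hr]
    have e3 : ∀ j, (Real.sqrt β₂ ^ j * g (k - j) i) ^ 2 = β₂ ^ j * (g (k - j) i) ^ 2 := by
      intro j
      rw [mul_pow, ← pow_mul, mul_comm j 2, pow_mul, hsq]
    calc S ^ 2 = (∑ j ∈ Finset.range k,
          (β₁ / Real.sqrt β₂) ^ j * (Real.sqrt β₂ ^ j * g (k - j) i)) ^ 2 := by
            rw [hS]; congr 1; exact Finset.sum_congr rfl fun j _ => (e1 j).symm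
      _ ≤ (∑ j ∈ Finset.range k, ((β₁ / Real.sqrt β₂) ^ j) ^ 2) *
          (∑ j ∈ Finset.range k, (Real.sqrt β₂ ^ j * g (k - j) i) ^ 2) := h
      _ = R * T := by
            rw [hR, hT]
            congr 1
            · exact Finset.sum_congr rfl fun j _ => e2 j
            · exact Finset.sum_congr rfl fun j _ => e3 j
  have hRle : R * (1 - r) ≤ 1 := by
    rw [hR, geom_sum_eq hr1.ne]
    have hne : r - 1 ≠ 0 := sub_ne_zero.mpr hr1.ne
    have : (r ^ k - 1) / (r - 1) * (1 - r) = 1 - r ^ k := by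
      rw [show (1:ℝ) - r = -(r - 1) by ring, mul_neg, div_mul_cancel₀ _ hne]
      ring
    rw [this]
    have : 0 ≤ r ^ k := by positivity
    linarith
  have hvT : (1 - β₂) * T ≤ v k i := by
    rw [hvsum k]
    have : 0 ≤ β₂ ^ k * v 0 i := mul_nonneg (by positivity) (hv0 i)
    linarith
  rw [hmsum k]
  have hb : 0 < 1 - β₂ := by linarith
  have hc : 0 < 1 - r := by linarith
  rw [mul_div_assoc' , le_div_iff₀ (by positivity)]
  have key : S ^ 2 * (1 - r) ≤ T := by
    nlinarith [mul_le_mul_of_nonneg_right hcs hc.le, mul_le_mul_of_nonneg_right hRle hT0]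
  nlinarith [mul_le_mul_of_nonneg_left hvT (sq_nonneg (1 - β₁)),
    mul_le_mul_of_nonneg_left key (mul_nonneg (sq_nonneg (1 - β₁)) hb.le)]
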